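/- arXiv:1905.10687 — 2 statements merged into one kernel-verified Lean document; each statement's English description precedes it below -/
import Mathlib

section
/- (Knothe–Rosenblatt pushforward, marginal part) Let p_{y,x} be a probability density on ℝ^m × ℝ^d with marginal p_y(y) = ∫ p_{y,x}(y,x) dx, and let p_z(z_y, z_x) = p_{z_y}(z_y) p_{z_x}(z_x) be a product probability density on ℝ^m × ℝ^d. Suppose T : ℝ^{m+d} → ℝ^{m+d} is a C¹ diffeomorphism of block-triangular form T(y, x) = (T^y(y), T^x(y, x)) with T^y(y) ∈ ℝ^m, such that T_# p_{y,x} = p_z. Then T^y : ℝ^m → ℝ^m is a C¹ diffeomorphism satisfying (T^y)_# p_y = p_{z_y}; equivalently, its inverse S^y = (T^y)^{-1} satisfies (S^y)_# p_{z_y} = p_y. -/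
open MeasureTheory

/-- Determinant of a block lower-triangular continuous linear map on a product. -/
lemma clm_det_triangular {m d : ℕ}
    (L : ((Fin m → ℝ) × (Fin d → ℝ)) →L[ℝ] ((Fin m → ℝ) × (Fin d → ℝ)))
    (A : (Fin m → ℝ) →L[ℝ] (Fin m → ℝ)) (D : (Fin d → ℝ) →L[ℝ] (Fin d → ℝ))
    (htri : ∀ v, (L v).1 = A v.1) (hD : ∀ w, (L (0, w)).2 = D w) :
    L.det = A.det * D.det := by
  classical
  set bm := Pi.basisFun ℝ (Fin m) with hbm
  set bd := Pi.basisFun ℝ (Fin d) with hbd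
  set b := bm.prod bd with hb
  have hinl : ∀ j, b (Sum.inl j) = (bm j, (0 : Fin d → ℝ)) := by
    intro j
    exact Prod.ext (bm.prod_apply_inl_fst bd j) (bm.prod_apply_inl_snd bd j)
  have hinr : ∀ j, b (Sum.inr j) = ((0 : Fin m → ℝ), bd j) := by
    intro j
    exact Prod.ext (bm.prod_apply_inr_fst bd j) (bm.prod_apply_inr_snd bd j)
  have hmat : LinearMap.toMatrix b b (L : _ →ₗ[ℝ] _) =
      Matrix.fromBlocks (LinearMap.toMatrix bm bm (A : _ →ₗ[ℝ] _)) 0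
        (Matrix.of fun i j => bd.repr (L (bm j, 0)).2 i)
        (LinearMap.toMatrix bd bd (D : _ →ₗ[ℝ] _)) := by
    ext i j
    cases i with
    | inl i =>
      cases j with
      | inl j =>
        simp [hb, LinearMap.toMatrix_apply, Module.Basis.prod_repr_inl, hinl, htri]
      | inr j =>
        have h0 := htri ((0 : Fin m → ℝ), bd j)
        simp only [hb, LinearMap.toMatrix_apply, Module.Basis.prod_repr_inl, hinr,
          Matrix.fromBlocks_apply₁₂, Matrix.zero_apply, ContinuousLinearMap.coe_coe]
        rw [← hb, hinr, h0]
        simp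
    | inr i =>
      cases j with
      | inl j =>
        simp [hb, LinearMap.toMatrix_apply, Module.Basis.prod_repr_inr, hinl]
      | inr j =>
        simp [hb, LinearMap.toMatrix_apply, Module.Basis.prod_repr_inr, hinr, hD]
  calc L.det
      = (LinearMap.toMatrix b b
          (L : ((Fin m → ℝ) × (Fin d → ℝ)) →ₗ[ℝ] ((Fin m → ℝ) × (Fin d → ℝ)))).det :=
        (LinearMap.det_toMatrix b _).symm
    _ = (LinearMap.toMatrix bm bm ((A : (Fin m → ℝ) →ₗ[ℝ] (Fin m → ℝ)))).det
        * (LinearMap.toMatrix bd bd ((D : (Fin d → ℝ) →ₗ[ℝ] (Fin d → ℝ)))).det := by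
        rw [hmat, Matrix.det_fromBlocks_zero₁₂]
    _ = A.det * D.det := by rw [LinearMap.det_toMatrix, LinearMap.det_toMatrix]

/-- If a block lower-triangular continuous linear map is injective, so is its top-left block. -/
lemma clm_triangular_fst_injective {m d : ℕ}
    (L : ((Fin m → ℝ) × (Fin d → ℝ)) →L[ℝ] ((Fin m → ℝ) × (Fin d → ℝ)))
    (A : (Fin m → ℝ) →L[ℝ] (Fin m → ℝ))
    (htri : ∀ v, (L v).1 = A v.1) (hLinj : Function.Injective L) :
    Function.Injective A := by
  set D : (Fin d → ℝ) →ₗ[ℝ] (Fin d → ℝ) :=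
    (LinearMap.snd ℝ (Fin m → ℝ) (Fin d → ℝ)).comp
      ((L : _ →ₗ[ℝ] _).comp (LinearMap.inr ℝ (Fin m → ℝ) (Fin d → ℝ))) with hDdef
  have hDapp : ∀ w, D w = (L (0, w)).2 := fun w => rfl
  have hDinj : Function.Injective D := by
    intro a c h
    have h1 : L (0, a) = L (0, c) := by
      refine Prod.ext ?_ ?_
      · rw [htri, htri]
      · rw [← hDapp, ← hDapp, h]
    have := hLinj h1
    exact (Prod.mk.injEq _ _ _ _).mp this |>.2
  have hDsurj : Function.Surjective D := LinearMap.injective_iff_surjective.mp hDinj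
  have hker : ∀ u, A u = 0 → u = 0 := by
    intro u hu
    obtain ⟨w, hw⟩ := hDsurj ((L (u, 0)).2)
    have h1 : L (0, w) = L (u, 0) := by
      refine Prod.ext ?_ ?_
      · rw [htri, htri]
        simp [hu]
      · rw [← hDapp, hw]
    have := hLinj h1
    exact ((Prod.mk.injEq _ _ _ _).mp this |>.1).symm
  intro a c h
  have : A (a - c) = 0 := by rw [map_sub, h, sub_self]
  have := hker _ this
  exact sub_eq_zero.mp this

/-- **Knothe–Rosenblatt pushforward, marginal part.** Let `pjoint`
be a probability density on ℝ^m × ℝ^d with marginal `py`, and let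
`pz (zy, zx) = pzy zy * pzx zx` be a product probability density. If `T` is a C¹
diffeomorphism (inverse `S`) of block-triangular form `T (y, x) = (Ty y, ...)`
with `T_# pjoint = pz` (expressed by the density formula
`pz v = pjoint (S v) * |det ∇S(v)|`), then `Ty` is a C¹ diffeomorphism of ℝ^m
whose inverse `Sy` satisfies `(Ty)_# py = pzy`, i.e.
`pzy zy = py (Sy zy) * |det ∇Sy(zy)|` for all `zy`. -/
theorem knothe_rosenblatt_marginal
    (m d : ℕ)
    (pjoint : (Fin m → ℝ) × (Fin d → ℝ) → ℝ)
    (hpjoint_nonneg : ∀ w, 0 ≤ pjoint w) (hpjoint_prob : ∫ w, pjoint w = 1)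
    (py : (Fin m → ℝ) → ℝ) (hpy : ∀ y, py y = ∫ x, pjoint (y, x))
    (pzy : (Fin m → ℝ) → ℝ) (pzx : (Fin d → ℝ) → ℝ)
    (hpzy_nonneg : ∀ zy, 0 ≤ pzy zy) (hpzx_nonneg : ∀ zx, 0 ≤ pzx zx)
    (hpzy_prob : ∫ zy, pzy zy = 1) (hpzx_prob : ∫ zx, pzx zx = 1)
    (T S : (Fin m → ℝ) × (Fin d → ℝ) → (Fin m → ℝ) × (Fin d → ℝ))
    (hT : ContDiff ℝ 1 T) (hS : ContDiff ℝ 1 S)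
    (hleft : Function.LeftInverse S T) (hright : Function.RightInverse S T)
    (Ty : (Fin m → ℝ) → (Fin m → ℝ))
    (htriangular : ∀ y x, (T (y, x)).1 = Ty y)
    (hpush : ∀ v : (Fin m → ℝ) × (Fin d → ℝ),
      pzy v.1 * pzx v.2 = pjoint (S v) * |(fderiv ℝ S v).det|) :
    ContDiff ℝ 1 Ty ∧
    ∃ Sy : (Fin m → ℝ) → (Fin m → ℝ), ContDiff ℝ 1 Sy ∧
      Function.LeftInverse Sy Ty ∧ Function.RightInverse Sy Ty ∧
      ∀ zy, pzy zy = py (Sy zy) * |(fderiv ℝ Sy zy).det| := by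
  have hTd : Differentiable ℝ T := hT.differentiable one_ne_zero
  have hSd : Differentiable ℝ S := hS.differentiable one_ne_zero
  have htriangular' : ∀ v, (T v).1 = Ty v.1 := fun v => htriangular v.1 v.2
  -- `Ty` is C¹
  have hTyC : ContDiff ℝ 1 Ty := by
    have : Ty = fun y => (T (y, (0 : Fin d → ℝ))).1 := by
      funext y; rw [htriangular]
    rw [this]
    exact (hT.comp (contDiff_id.prodMk contDiff_const)).fst
  have hTyd : Differentiable ℝ Ty := hTyC.differentiable one_ne_zero
  -- chain rule facts
  have hST : ∀ p, (fderiv ℝ S (T p)).comp (fderiv ℝ T p) =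
      ContinuousLinearMap.id ℝ ((Fin m → ℝ) × (Fin d → ℝ)) := by
    intro p
    have h1 : fderiv ℝ (S ∘ T) p = (fderiv ℝ S (T p)).comp (fderiv ℝ T p) :=
      fderiv_comp p (hSd _) (hTd _)
    rw [show S ∘ T = id from funext hleft, fderiv_id] at h1
    exact h1.symm
  have hTS : ∀ v, (fderiv ℝ T (S v)).comp (fderiv ℝ S v) =
      ContinuousLinearMap.id ℝ ((Fin m → ℝ) × (Fin d → ℝ)) := by
    intro v
    have h1 : fderiv ℝ (T ∘ S) v = (fderiv ℝ T (S v)).comp (fderiv ℝ S v) :=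
      fderiv_comp v (hTd _) (hSd _)
    rw [show T ∘ S = id from funext hright, fderiv_id] at h1
    exact h1.symm
  have hDTinj : ∀ p, Function.Injective (fderiv ℝ T p) := by
    intro p a c h
    have h1 := congrArg (fderiv ℝ S (T p)) h
    have ha := ContinuousLinearMap.ext_iff.mp (hST p) a
    have hc := ContinuousLinearMap.ext_iff.mp (hST p) c
    simp only [ContinuousLinearMap.comp_apply, ContinuousLinearMap.id_apply] at ha hc
    rw [ha, hc] at h1
    exact h1
  -- triangularity of the derivative of T
  have hDT_tri : ∀ v (u : Fin m → ℝ) (w : Fin d → ℝ),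
      ((fderiv ℝ T v) (u, w)).1 = fderiv ℝ Ty v.1 u := by
    intro v u w
    have h1 : HasFDerivAt (fun p : (Fin m → ℝ) × (Fin d → ℝ) => (T p).1)
        ((ContinuousLinearMap.fst ℝ (Fin m → ℝ) (Fin d → ℝ)).comp (fderiv ℝ T v)) v :=
      (ContinuousLinearMap.fst ℝ (Fin m → ℝ) (Fin d → ℝ)).hasFDerivAt.comp v (hTd v).hasFDerivAt
    have h2 : HasFDerivAt (fun p : (Fin m → ℝ) × (Fin d → ℝ) => Ty p.1)
        ((fderiv ℝ Ty v.1).comp (ContinuousLinearMap.fst ℝ (Fin m → ℝ) (Fin d → ℝ))) v :=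
      (hTyd v.1).hasFDerivAt.comp v
        (hasFDerivAt_fst :
          HasFDerivAt (fun p : (Fin m → ℝ) × (Fin d → ℝ) => p.1)
            (ContinuousLinearMap.fst ℝ (Fin m → ℝ) (Fin d → ℝ)) v)
    have heq : (fun p : (Fin m → ℝ) × (Fin d → ℝ) => (T p).1)
        = fun p => Ty p.1 := funext htriangular'
    rw [heq] at h1
    have := h1.unique h2
    exact ContinuousLinearMap.ext_iff.mp this (u, w)
  have hDTyinj : ∀ y, Function.Injective (fderiv ℝ Ty y) := by
    intro y
    refine clm_triangular_fst_injective (fderiv ℝ T (y, 0)) (fderiv ℝ Ty y) ?_ (hDTinj (y, 0))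
    intro v
    exact hDT_tri (y, 0) v.1 v.2
  -- S is triangular
  have hS_tri : ∀ zy zx, (S (zy, zx)).1 = (S (zy, (0 : Fin d → ℝ))).1 := by
    intro zy zx
    set G : (Fin d → ℝ) → (Fin m → ℝ) := fun w => (S (zy, w)).1 with hG
    have hGd : Differentiable ℝ G := by
      intro w
      exact ((hSd (zy, w)).comp w ((differentiableAt_const zy).prodMk differentiableAt_id)).fst
    have hconst : (fun w => Ty (G w)) = fun _ => zy := by
      funext w
      have h1 : Ty (G w) = (T ((S (zy, w)).1, (S (zy, w)).2)).1 := (htriangular _ _).symm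
      rw [h1]
      have : ((S (zy, w)).1, (S (zy, w)).2) = S (zy, w) := rfl
      rw [this, hright (zy, w)]
    have hzero : ∀ w, fderiv ℝ G w = 0 := by
      intro w
      have h1 : HasFDerivAt (fun w => Ty (G w))
          ((fderiv ℝ Ty (G w)).comp (fderiv ℝ G w)) w :=
        (hTyd (G w)).hasFDerivAt.comp w (hGd w).hasFDerivAt
      rw [hconst] at h1
      have h2 : HasFDerivAt (fun _ : (Fin d → ℝ) => zy)
          ((0 : (Fin d → ℝ) →L[ℝ] (Fin m → ℝ))) w := hasFDerivAt_const zy w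
      have h3 := h1.unique h2
      ext u : 1
      have := ContinuousLinearMap.ext_iff.mp h3 u
      simp only [ContinuousLinearMap.comp_apply, ContinuousLinearMap.zero_apply] at this ⊢
      have h4 : fderiv ℝ Ty (G w) (fderiv ℝ G w u) = fderiv ℝ Ty (G w) 0 := by
        rw [this, map_zero]
      exact hDTyinj (G w) h4
    exact is_const_of_fderiv_eq_zero hGd hzero zx 0
  set Sy : (Fin m → ℝ) → (Fin m → ℝ) := fun zy => (S (zy, (0 : Fin d → ℝ))).1 with hSydef
  have hS_tri' : ∀ v : (Fin m → ℝ) × (Fin d → ℝ), (S v).1 = Sy v.1 := fun v => hS_tri v.1 v.2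
  have hSyC : ContDiff ℝ 1 Sy :=
    (hS.comp (contDiff_id.prodMk contDiff_const)).fst
  have hSyd : Differentiable ℝ Sy := hSyC.differentiable one_ne_zero
  -- inverse properties
  have hTySy : Function.RightInverse Sy Ty := by
    intro zy
    have h1 : Ty (Sy zy) = (T ((S (zy, 0)).1, (S (zy, 0)).2)).1 := (htriangular _ _).symm
    rw [h1]
    have : ((S (zy, (0 : Fin d → ℝ))).1, (S (zy, 0)).2) = S (zy, 0) := rfl
    rw [this, hright (zy, 0)]
  have hSyTy : Function.LeftInverse Sy Ty := by
    intro y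
    have h1 : (Ty y, (T (y, (0 : Fin d → ℝ))).2) = T (y, 0) :=
      Prod.ext (htriangular y 0).symm rfl
    have h2 : Sy (Ty y) = (S (Ty y, (T (y, (0 : Fin d → ℝ))).2)).1 :=
      (hS_tri (Ty y) ((T (y, 0)).2)).symm
    rw [h2, h1, hleft (y, 0)]
  -- triangularity of the derivative of S
  have hDS_tri : ∀ v (u : Fin m → ℝ) (w : Fin d → ℝ),
      ((fderiv ℝ S v) (u, w)).1 = fderiv ℝ Sy v.1 u := by
    intro v u w
    have h1 : HasFDerivAt (fun p : (Fin m → ℝ) × (Fin d → ℝ) => (S p).1)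
        ((ContinuousLinearMap.fst ℝ (Fin m → ℝ) (Fin d → ℝ)).comp (fderiv ℝ S v)) v :=
      (ContinuousLinearMap.fst ℝ (Fin m → ℝ) (Fin d → ℝ)).hasFDerivAt.comp v (hSd v).hasFDerivAt
    have h2 : HasFDerivAt (fun p : (Fin m → ℝ) × (Fin d → ℝ) => Sy p.1)
        ((fderiv ℝ Sy v.1).comp (ContinuousLinearMap.fst ℝ (Fin m → ℝ) (Fin d → ℝ))) v :=
      (hSyd v.1).hasFDerivAt.comp v
        (hasFDerivAt_fst :
          HasFDerivAt (fun p : (Fin m → ℝ) × (Fin d → ℝ) => p.1)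
            (ContinuousLinearMap.fst ℝ (Fin m → ℝ) (Fin d → ℝ)) v)
    have heq : (fun p : (Fin m → ℝ) × (Fin d → ℝ) => (S p).1)
        = fun p => Sy p.1 := funext hS_tri'
    rw [heq] at h1
    have := h1.unique h2
    exact ContinuousLinearMap.ext_iff.mp this (u, w)
  refine ⟨hTyC, Sy, hSyC, hSyTy, hTySy, ?_⟩
  -- the density formula
  intro zy
  set f : (Fin d → ℝ) → (Fin d → ℝ) := fun zx => (S (zy, zx)).2 with hfdef
  set f' : (Fin d → ℝ) → ((Fin d → ℝ) →L[ℝ] (Fin d → ℝ)) := fun zx =>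
    (ContinuousLinearMap.snd ℝ (Fin m → ℝ) (Fin d → ℝ)).comp
      ((fderiv ℝ S (zy, zx)).comp (ContinuousLinearMap.inr ℝ (Fin m → ℝ) (Fin d → ℝ)))
    with hf'def
  have hf' : ∀ zx, HasFDerivAt f (f' zx) zx := by
    intro zx
    have h1 : HasFDerivAt (fun zx : (Fin d → ℝ) => (zy, zx))
        (ContinuousLinearMap.inr ℝ (Fin m → ℝ) (Fin d → ℝ)) zx :=
      hasFDerivAt_prodMk_right zy zx
    have h2 : HasFDerivAt (fun zx : (Fin d → ℝ) => S (zy, zx))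
        ((fderiv ℝ S (zy, zx)).comp (ContinuousLinearMap.inr ℝ (Fin m → ℝ) (Fin d → ℝ))) zx :=
      (hSd (zy, zx)).hasFDerivAt.comp zx h1
    exact (ContinuousLinearMap.snd ℝ (Fin m → ℝ) (Fin d → ℝ)).hasFDerivAt.comp zx h2
  have hSinj : Function.Injective S := Function.LeftInverse.injective hright
  have hfinj : Set.InjOn f Set.univ := by
    intro a _ c _ h
    have h1 : S (zy, a) = S (zy, c) := by
      refine Prod.ext ?_ h
      rw [hS_tri' (zy, a), hS_tri' (zy, c)]
    have := hSinj h1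
    exact ((Prod.mk.injEq _ _ _ _).mp this).2
  have hfsurj : Function.Surjective f := by
    intro x
    refine ⟨(T (Sy zy, x)).2, ?_⟩
    have h1 : (zy, (T (Sy zy, x)).2) = T (Sy zy, x) :=
      Prod.ext (by rw [htriangular]; exact (hTySy zy).symm) rfl
    show (S (zy, (T (Sy zy, x)).2)).2 = x
    rw [h1, hleft (Sy zy, x)]
  have hfimage : f '' Set.univ = Set.univ := by
    rw [Set.image_univ]
    exact Set.range_eq_univ.mpr hfsurj
  -- change of variables
  have hCOV : (∫ x, pjoint (Sy zy, x)) = ∫ zx, |(f' zx).det| • pjoint (Sy zy, f zx) := by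
    have h := integral_image_eq_integral_abs_det_fderiv_smul (volume) MeasurableSet.univ
      (fun x _ => (hf' x).hasFDerivWithinAt) hfinj (fun x => pjoint (Sy zy, x))
    rw [hfimage, Measure.restrict_univ] at h
    exact h
  -- pointwise identity
  have hkey : ∀ zx, |(fderiv ℝ Sy zy).det| * (|(f' zx).det| • pjoint (Sy zy, f zx))
      = pzy zy * pzx zx := by
    intro zx
    have hSv : S (zy, zx) = (Sy zy, f zx) := Prod.ext (hS_tri' (zy, zx)) rfl
    have hdet : (fderiv ℝ S (zy, zx)).det = (fderiv ℝ Sy zy).det * (f' zx).det := by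
      refine clm_det_triangular (fderiv ℝ S (zy, zx)) (fderiv ℝ Sy zy) (f' zx) ?_ ?_
      · intro v
        exact hDS_tri (zy, zx) v.1 v.2
      · intro w
        rfl
    have h1 := hpush (zy, zx)
    simp only at h1
    rw [hSv, hdet, abs_mul] at h1
    rw [h1, smul_eq_mul]
    ring
  -- conclude
  have hfinal : pzy zy = |(fderiv ℝ Sy zy).det| * ∫ x, pjoint (Sy zy, x) := by
    calc pzy zy = pzy zy * ∫ zx, pzx zx := by rw [hpzx_prob, mul_one]
      _ = ∫ zx, pzy zy * pzx zx := (integral_const_mul _ _).symm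
      _ = ∫ zx, |(fderiv ℝ Sy zy).det| * (|(f' zx).det| • pjoint (Sy zy, f zx)) := by
          refine integral_congr_ae (Filter.Eventually.of_forall fun zx => ?_)
          exact (hkey zx).symm
      _ = |(fderiv ℝ Sy zy).det| * ∫ zx, |(f' zx).det| • pjoint (Sy zy, f zx) :=
          integral_const_mul _ _
      _ = |(fderiv ℝ Sy zy).det| * ∫ x, pjoint (Sy zy, x) := by rw [hCOV]
  rw [hfinal, hpy, mul_comm]
end

section
/- (Knothe–Rosenblatt pushforward, conditional part) Let p_{y,x} be a strictly positive probability density on ℝ^m × ℝ^d with marginal p_y and conditional densities p_{x|y}(x|y) = p_{y,x}(y,x)/p_y(y), and let p_z(z_y, z_x) = p_{z_y}(z_y) p_{z_x}(z_x) be a product probability density on ℝ^m × ℝ^d with strictly positive factors. Suppose T : ℝ^{m+d} → ℝ^{m+d} is a C¹ diffeomorphism of block-triangular form T(y, x) = (T^y(y), T^x(y, x)) with T_# p_{y,x} = p_z, and write the inverse as S(z_y, z_x) = (S^y(z_y), S^x(z_y, z_x)). Then for p_y-almost every y ∈ ℝ^m, the map x ↦ S^x(T^y(y), x) from ℝ^d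 to ℝ^d pushes p_{z_x} forward to the posterior p_{x|y}(·|y); i.e., if z_x is distributed with density p_{z_x}, then S^x(T^y(y), z_x) is distributed with density p_{x|y}(·|y). -/
open MeasureTheory Set
open scoped ENNReal

lemma map_withDensity_comp {α β : Type*} [MeasurableSpace α] [MeasurableSpace β]
    (μ : Measure α) {f : α → β} (hf : Measurable f) {q : β → ℝ≥0∞} (hq : Measurable q) :
    Measure.map f (μ.withDensity (fun a => q (f a))) = (Measure.map f μ).withDensity q := by
  ext s hs
  rw [Measure.map_apply hf hs, withDensity_apply _ hs, withDensity_apply _ (hf hs),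
    setLIntegral_map hs hq hf]

lemma det_triangular_clm {m d : ℕ}
    (L : ((Fin m → ℝ) × (Fin d → ℝ)) →L[ℝ] ((Fin m → ℝ) × (Fin d → ℝ)))
    (A : (Fin m → ℝ) →L[ℝ] (Fin m → ℝ)) (D : (Fin d → ℝ) →L[ℝ] (Fin d → ℝ))
    (hA : ∀ u, (L (u, 0)).1 = A u) (hD : ∀ w, (L (0, w)).2 = D w)
    (h0 : ∀ w, (L (0, w)).1 = 0) :
    L.det = A.det * D.det := by
  classical
  set bE := Pi.basisFun ℝ (Fin m)
  set bF := Pi.basisFun ℝ (Fin d)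
  set b := bE.prod bF
  change LinearMap.det L.toLinearMap = LinearMap.det A.toLinearMap * LinearMap.det D.toLinearMap
  rw [← LinearMap.det_toMatrix b, ← LinearMap.det_toMatrix bE, ← LinearMap.det_toMatrix bF]
  have hM : LinearMap.toMatrix b b (L : _ →ₗ[ℝ] _) =
      Matrix.fromBlocks
        (LinearMap.toMatrix bE bE (A : _ →ₗ[ℝ] _))
        0
        (Matrix.of fun i j => (L (bE j, 0)).2 i)
        (LinearMap.toMatrix bF bF (D : _ →ₗ[ℝ] _)) := by
    ext i j
    rcases i with i | i <;> rcases j with j | j <;>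
      simp [LinearMap.toMatrix_apply, b, bE, bF, Module.Basis.prod_apply, hA, hD, h0,
        Pi.basisFun_repr, Pi.basisFun_apply]
  rw [hM, Matrix.det_fromBlocks_zero₁₂]

/-- **Knothe–Rosenblatt pushforward, conditional part.** Let
`pjoint > 0` be a probability density on ℝ^m × ℝ^d with marginal `py` and
conditional densities `p_{x|y}(x|y) = pjoint (y,x) / py y`, and let
`pz (zy, zx) = pzy zy * pzx zx` with strictly positive factors. If `T` is a C¹
diffeomorphism of block-triangular form `T (y, x) = (Ty y, ...)` with
`T_# pjoint = pz` (density formula via the inverse `S`), and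
`S (zy, zx) = (Sy zy, Sx zy zx)`, then for `py`-almost every `y` the map
`zx ↦ Sx (Ty y) zx` pushes the density `pzx` forward to the posterior
`p_{x|y}(·|y)` (as an equality of measures with those densities). -/
theorem knothe_rosenblatt_conditional
    (m d : ℕ)
    (pjoint : (Fin m → ℝ) × (Fin d → ℝ) → ℝ)
    (hpjoint_pos : ∀ w, 0 < pjoint w) (hpjoint_prob : ∫ w, pjoint w = 1)
    (py : (Fin m → ℝ) → ℝ) (hpy : ∀ y, py y = ∫ x, pjoint (y, x))
    (pzy : (Fin m → ℝ) → ℝ) (pzx : (Fin d → ℝ) → ℝ)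
    (hpzy_pos : ∀ zy, 0 < pzy zy) (hpzx_pos : ∀ zx, 0 < pzx zx)
    (hpzy_prob : ∫ zy, pzy zy = 1) (hpzx_prob : ∫ zx, pzx zx = 1)
    (T S : (Fin m → ℝ) × (Fin d → ℝ) → (Fin m → ℝ) × (Fin d → ℝ))
    (hT : ContDiff ℝ 1 T) (hS : ContDiff ℝ 1 S)
    (hleft : Function.LeftInverse S T) (hright : Function.RightInverse S T)
    (Ty : (Fin m → ℝ) → (Fin m → ℝ))
    (htriangular : ∀ y x, (T (y, x)).1 = Ty y)
    (Sy : (Fin m → ℝ) → (Fin m → ℝ))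
    (Sx : (Fin m → ℝ) → (Fin d → ℝ) → (Fin d → ℝ))
    (hSsplit : ∀ z : (Fin m → ℝ) × (Fin d → ℝ), S z = (Sy z.1, Sx z.1 z.2))
    (hpush : ∀ v : (Fin m → ℝ) × (Fin d → ℝ),
      pzy v.1 * pzx v.2 = pjoint (S v) * |(fderiv ℝ S v).det|) :
    ∀ᵐ y ∂(volume.withDensity fun y => ENNReal.ofReal (py y)),
      Measure.map (fun zx => Sx (Ty y) zx)
          (volume.withDensity fun zx => ENNReal.ofReal (pzx zx)) =
        volume.withDensity fun x => ENNReal.ofReal (pjoint (y, x) / py y) := by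
  apply ae_of_all
  intro y
  have hS1 : ∀ z : (Fin m → ℝ) × (Fin d → ℝ), (S z).1 = Sy z.1 := fun z => by rw [hSsplit]
  have hS2 : ∀ z : (Fin m → ℝ) × (Fin d → ℝ), (S z).2 = Sx z.1 z.2 := fun z => by rw [hSsplit]
  set a : (Fin m → ℝ) := Ty y with ha
  set g : (Fin d → ℝ) → (Fin d → ℝ) := fun zx => Sx a zx with hgdef
  set h : (Fin d → ℝ) → (Fin d → ℝ) := fun x => (T (y, x)).2 with hhdef
  -- inverse identities
  have hSya : Sy a = y := by
    have h1 := hleft (y, 0)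
    have := congrArg Prod.fst h1
    rwa [hS1, htriangular] at this
  have hgh : ∀ x, g (h x) = x := by
    intro x
    have h1 := congrArg Prod.snd (hleft (y, x))
    rw [hS2, htriangular] at h1
    exact h1
  have hhg : ∀ zx, h (g zx) = zx := by
    intro zx
    have h1 := congrArg Prod.snd (hright (a, zx))
    have h2 : S (a, zx) = (y, g zx) := by rw [hSsplit]; simp [hSya, hgdef]
    rw [h2] at h1
    exact h1
  have ginj : Function.Injective g := Function.LeftInverse.injective hhg
  have gsurj : Function.Surjective g := Function.RightInverse.surjective hgh
  -- smoothness
  have hSdiff : Differentiable ℝ S := hS.differentiable one_ne_zero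
  have hTdiff : Differentiable ℝ T := hT.differentiable one_ne_zero
  have hg_eq : g = fun zx => (S (a, zx)).2 := funext fun zx => (hS2 (a, zx)).symm
  have hg : ContDiff ℝ 1 g := by
    rw [hg_eq]
    exact (hS.comp (contDiff_const.prodMk contDiff_id)).snd
  have hgdiff : Differentiable ℝ g := hg.differentiable one_ne_zero
  -- derivatives
  have hDS : ∀ v : (Fin m → ℝ) × (Fin d → ℝ), HasFDerivAt S (fderiv ℝ S v) v := fun v => (hSdiff v).hasFDerivAt
  have hSy_deriv : ∀ zx : (Fin d → ℝ),
      HasFDerivAt Sy ((ContinuousLinearMap.fst ℝ (Fin m → ℝ) (Fin d → ℝ)).comp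
        ((fderiv ℝ S (a, zx)).comp (ContinuousLinearMap.inl ℝ (Fin m → ℝ) (Fin d → ℝ)))) a := by
    intro zx
    have h1 : HasFDerivAt (fun u : (Fin m → ℝ) => S (u, zx))
        ((fderiv ℝ S (a, zx)).comp (ContinuousLinearMap.inl ℝ (Fin m → ℝ) (Fin d → ℝ))) a :=
      (hDS (a, zx)).comp a (hasFDerivAt_prodMk_left a zx)
    have h2 := h1.fst
    have h3 : (fun u : (Fin m → ℝ) => (S (u, zx)).1) = Sy := funext fun u => by rw [hS1]
    rwa [h3] at h2
  have hSy_diff : DifferentiableAt ℝ Sy a := (hSy_deriv 0).differentiableAt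
  set A : (Fin m → ℝ) →L[ℝ] (Fin m → ℝ) := fderiv ℝ Sy a with hAdef
  have hSyA : HasFDerivAt Sy A a := hSy_diff.hasFDerivAt
  have hA : ∀ zx : (Fin d → ℝ), A = (ContinuousLinearMap.fst ℝ (Fin m → ℝ) (Fin d → ℝ)).comp
      ((fderiv ℝ S (a, zx)).comp (ContinuousLinearMap.inl ℝ (Fin m → ℝ) (Fin d → ℝ))) :=
    fun zx => (hSy_deriv zx).fderiv
  have hg_deriv : ∀ zx : (Fin d → ℝ),
      HasFDerivAt g ((ContinuousLinearMap.snd ℝ (Fin m → ℝ) (Fin d → ℝ)).comp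
        ((fderiv ℝ S (a, zx)).comp (ContinuousLinearMap.inr ℝ (Fin m → ℝ) (Fin d → ℝ)))) zx := by
    intro zx
    have h1 : HasFDerivAt (fun w : (Fin d → ℝ) => S (a, w))
        ((fderiv ℝ S (a, zx)).comp (ContinuousLinearMap.inr ℝ (Fin m → ℝ) (Fin d → ℝ))) zx :=
      (hDS (a, zx)).comp zx (hasFDerivAt_prodMk_right a zx)
    have h2 := h1.snd
    have h3 : (fun w : (Fin d → ℝ) => (S (a, w)).2) = g := funext fun w => (hS2 (a, w))
    rwa [h3] at h2
  have hDg : ∀ zx : (Fin d → ℝ), fderiv ℝ g zx = (ContinuousLinearMap.snd ℝ (Fin m → ℝ) (Fin d → ℝ)).comp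
      ((fderiv ℝ S (a, zx)).comp (ContinuousLinearMap.inr ℝ (Fin m → ℝ) (Fin d → ℝ))) :=
    fun zx => (hg_deriv zx).fderiv
  have hgD : ∀ zx : (Fin d → ℝ), HasFDerivAt g (fderiv ℝ g zx) zx := fun zx => (hgdiff zx).hasFDerivAt
  -- block structure
  have h0 : ∀ (zx : (Fin d → ℝ)) (w : (Fin d → ℝ)), ((fderiv ℝ S (a, zx)) (0, w)).1 = 0 := by
    intro zx w
    have hfstS : HasFDerivAt (fun z : (Fin m → ℝ) × (Fin d → ℝ) => (S z).1)
        ((ContinuousLinearMap.fst ℝ (Fin m → ℝ) (Fin d → ℝ)).comp (fderiv ℝ S (a, zx))) (a, zx) := (hDS (a, zx)).fst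
    have hcomp : HasFDerivAt (fun z : (Fin m → ℝ) × (Fin d → ℝ) => Sy z.1)
        (A.comp (ContinuousLinearMap.fst ℝ (Fin m → ℝ) (Fin d → ℝ))) (a, zx) :=
      HasFDerivAt.comp (a, zx) hSyA hasFDerivAt_fst
    have heqf : (fun z : (Fin m → ℝ) × (Fin d → ℝ) => (S z).1) = fun z : (Fin m → ℝ) × (Fin d → ℝ) => Sy z.1 := funext fun z => hS1 z
    rw [heqf] at hfstS
    have huniq := hfstS.unique hcomp
    have := congrFun (congrArg (fun (L : ((Fin m → ℝ) × (Fin d → ℝ)) →L[ℝ] (Fin m → ℝ)) => (L : (Fin m → ℝ) × (Fin d → ℝ) → (Fin m → ℝ))) huniq) (0, w)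
    simpa using this
  have hdet : ∀ zx : (Fin d → ℝ), (fderiv ℝ S (a, zx)).det = A.det * (fderiv ℝ g zx).det := by
    intro zx
    apply det_triangular_clm
    · intro u; rw [hA zx]; rfl
    · intro w; rw [hDg zx]; rfl
    · exact h0 zx
  -- nonvanishing determinant of DS
  have hdetS_ne : ∀ v : (Fin m → ℝ) × (Fin d → ℝ), (fderiv ℝ S v).det ≠ 0 := by
    intro v
    have hv : T (S v) = v := hright v
    set w := S v with hw
    have hcomp : HasFDerivAt (S ∘ T) ((fderiv ℝ S (T w)).comp (fderiv ℝ T w)) w :=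
      ((hSdiff (T w)).hasFDerivAt).comp w (hTdiff w).hasFDerivAt
    have hid : (S ∘ T) = id := funext fun z => hleft z
    rw [hid] at hcomp
    have huniq : (fderiv ℝ S (T w)).comp (fderiv ℝ T w) = ContinuousLinearMap.id ℝ ((Fin m → ℝ) × (Fin d → ℝ)) :=
      hcomp.unique (hasFDerivAt_id w)
    have hdet1 : (fderiv ℝ S (T w)).det * (fderiv ℝ T w).det = 1 := by
      have := congrArg ContinuousLinearMap.det huniq
      simpa only [ContinuousLinearMap.det, ContinuousLinearMap.toLinearMap_comp, LinearMap.det_comp,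
        ContinuousLinearMap.coe_id, LinearMap.det_id] using this
    have : T w = v := hv
    rw [this] at hdet1
    exact left_ne_zero_of_mul_eq_one hdet1
  have hAdet_ne : A.det ≠ 0 := by
    intro hc
    apply hdetS_ne (a, (0 : (Fin d → ℝ)))
    rw [hdet 0, hc, zero_mul]
  have hDgdet_ne : ∀ zx : (Fin d → ℝ), (fderiv ℝ g zx).det ≠ 0 := by
    intro zx hc
    apply hdetS_ne (a, zx)
    rw [hdet zx, hc, mul_zero]
  have hAabs_pos : 0 < |A.det| := abs_pos.mpr hAdet_ne
  -- key pointwise identity from the pushforward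
  have key1 : ∀ zx : (Fin d → ℝ), pzy a * pzx zx = pjoint (y, g zx) * (|A.det| * |(fderiv ℝ g zx).det|) := by
    intro zx
    have hp := hpush (a, zx)
    have hSv : S (a, zx) = (y, g zx) := by rw [hSsplit]; simp [hSya, hgdef]
    rw [hSv, hdet zx, abs_mul] at hp
    exact hp
  -- change of variables for the marginal
  have himg : g '' univ = univ := by rw [image_univ]; exact gsurj.range_eq
  have hcov := integral_image_eq_integral_abs_det_fderiv_smul volume MeasurableSet.univ
      (fun zx _ => (hgD zx).hasFDerivWithinAt) (ginj.injOn) (fun x => pjoint (y, x))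
  rw [himg, Measure.restrict_univ] at hcov
  have hmarg : py y = pzy a / |A.det| := by
    have h1 : py y = ∫ zx, |(fderiv ℝ g zx).det| • pjoint (y, g zx) := by
      rw [hpy y, ← hcov]
    have h2 : ∀ zx : (Fin d → ℝ), |(fderiv ℝ g zx).det| • pjoint (y, g zx) = (pzy a / |A.det|) * pzx zx := by
      intro zx
      have hk := key1 zx
      have hDgabs : |(fderiv ℝ g zx).det| ≠ 0 := abs_ne_zero.mpr (hDgdet_ne zx)
      rw [smul_eq_mul]
      field_simp
      nlinarith [hk]
    rw [h1]
    simp_rw [h2]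
    rw [integral_const_mul, hpzx_prob, mul_one]
  have hpy_pos : 0 < py y := by
    rw [hmarg]; exact div_pos (hpzy_pos a) hAabs_pos
  -- the pointwise density identity
  have key2 : ∀ zx : (Fin d → ℝ), pzx zx = |(fderiv ℝ g zx).det| * (pjoint (y, g zx) / py y) := by
    intro zx
    have hk := key1 zx
    have hpzya : pzy a = py y * |A.det| := by
      rw [hmarg]; field_simp
    rw [hpzya] at hk
    have hpyne : py y ≠ 0 := ne_of_gt hpy_pos
    field_simp
    nlinarith [hk]
  -- measurable representative of pzx
  have hpzx_int : Integrable pzx := by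
    by_contra hc
    rw [integral_undef hc] at hpzx_prob
    exact one_ne_zero hpzx_prob.symm
  set ptil : (Fin d → ℝ) → ℝ := hpzx_int.1.mk pzx with hptildef
  have hptil_meas : Measurable ptil := hpzx_int.1.stronglyMeasurable_mk.measurable
  have hptil_ae : pzx =ᵐ[volume] ptil := hpzx_int.1.ae_eq_mk
  -- continuity of the jacobian
  have hDg_cont : Continuous fun zx : (Fin d → ℝ) => |(fderiv ℝ g zx).det| :=
    (ContinuousLinearMap.continuous_det.comp (hg.continuous_fderiv one_ne_zero)).abs
  have hh_cont : Continuous h := by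
    have : Continuous fun x : (Fin d → ℝ) => T (y, x) := hT.continuous.comp (continuous_const.prodMk continuous_id)
    exact (continuous_snd.comp this)
  -- images of null sets under g are null
  have himage_null : ∀ s : Set (Fin d → ℝ), volume s = 0 → volume (g '' s) = 0 := by
    intro s hs
    set t := toMeasurable volume s with htdef
    have hst : s ⊆ t := subset_toMeasurable volume s
    have htnull : volume t = 0 := by rw [measure_toMeasurable]; exact hs
    have h1 : volume (g '' t) = 0 := by
      rw [← lintegral_abs_det_fderiv_eq_addHaar_image volume (measurableSet_toMeasurable volume s)
        (fun zx _ => (hgD zx).hasFDerivWithinAt) (ginj.injOn)]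
      rw [Measure.restrict_eq_zero.mpr htnull]
      simp
    exact measure_mono_null (image_mono (f := g) hst) h1
  -- the two density functions agree a.e.
  set r : (Fin d → ℝ) → ℝ := fun x => pjoint (y, x) / py y with hrdef
  set rt : (Fin d → ℝ) → ℝ := fun x => ptil (h x) / |(fderiv ℝ g (h x)).det| with hrtdef
  have hr_eq : ∀ x, r x = pzx (h x) / |(fderiv ℝ g (h x)).det| := by
    intro x
    have hk := key2 (h x)
    rw [hgh x] at hk
    have hne : |(fderiv ℝ g (h x)).det| ≠ 0 := abs_ne_zero.mpr (hDgdet_ne (h x))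
    rw [hrdef, hk, mul_div_cancel_left₀ _ hne]
  have hrt_meas : Measurable rt := by
    apply Measurable.div
    · exact hptil_meas.comp hh_cont.measurable
    · exact (hDg_cont.comp hh_cont).measurable
  set q : (Fin d → ℝ) → ℝ≥0∞ := fun x => ENNReal.ofReal (rt x) with hqdef
  have hq_meas : Measurable q := ENNReal.measurable_ofReal.comp hrt_meas
  have hae1 : (fun x => ENNReal.ofReal (r x)) =ᵐ[volume] q := by
    have hsub : {x : (Fin d → ℝ) | ¬ ENNReal.ofReal (r x) = q x} ⊆ g '' {zx : (Fin d → ℝ) | ¬ pzx zx = ptil zx} := by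
      intro x hx
      by_contra hc
      apply hx
      have hxN : pzx (h x) = ptil (h x) := by
        by_contra hc2
        exact hc ⟨h x, hc2, hgh x⟩
      rw [hqdef, hrtdef, hr_eq x, hxN]
    apply measure_mono_null hsub
    apply himage_null
    exact hptil_ae
  have hbad_null : volume {zx : (Fin d → ℝ) | ¬ pzx zx = ptil zx} = 0 := hptil_ae
  -- main chain
  have hgmeas : Measurable g := hg.continuous.measurable
  calc Measure.map (fun zx => Sx (Ty y) zx) (volume.withDensity fun zx => ENNReal.ofReal (pzx zx))
      = Measure.map g (volume.withDensity fun zx =>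
          ENNReal.ofReal |(fderiv ℝ g zx).det| * q (g zx)) := by
        congr 1
        apply withDensity_congr_ae
        have hsub2 : {zx : (Fin d → ℝ) | ¬ ENNReal.ofReal (pzx zx)
            = ENNReal.ofReal |(fderiv ℝ g zx).det| * q (g zx)} ⊆ {zx : (Fin d → ℝ) | ¬ pzx zx = ptil zx} := by
          intro zx hzx
          by_contra hc
          apply hzx
          have hqg : q (g zx) = ENNReal.ofReal (ptil zx / |(fderiv ℝ g zx).det|) := by
            simp only [hqdef, hrtdef, hhg zx]
          rw [hqg, ← ENNReal.ofReal_mul (abs_nonneg _)]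
          have hDgabs : |(fderiv ℝ g zx).det| ≠ 0 := abs_ne_zero.mpr (hDgdet_ne zx)
          simp only [mem_setOf_eq, not_not] at hc
          congr 1
          rw [← hc]
          field_simp
        exact measure_mono_null hsub2 hbad_null
    _ = Measure.map g ((volume.withDensity fun zx =>
          ENNReal.ofReal |(fderiv ℝ g zx).det|).withDensity fun zx => q (g zx)) := by
        have hf_meas : Measurable fun zx : (Fin d → ℝ) => ENNReal.ofReal |(fderiv ℝ g zx).det| :=
          ENNReal.measurable_ofReal.comp hDg_cont.measurable
        have hqg_meas : Measurable fun zx : (Fin d → ℝ) => q (g zx) := hq_meas.comp hgmeas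
        rw [← withDensity_mul volume hf_meas hqg_meas]
        rfl
    _ = (Measure.map g (volume.withDensity fun zx =>
          ENNReal.ofReal |(fderiv ℝ g zx).det|)).withDensity q :=
        map_withDensity_comp _ hgmeas hq_meas
    _ = volume.withDensity q := by
        have := map_withDensity_abs_det_fderiv_eq_addHaar volume MeasurableSet.univ.nullMeasurableSet
          (fun zx _ => (hgD zx).hasFDerivWithinAt) (ginj.injOn)
        rw [Measure.restrict_univ, himg, Measure.restrict_univ] at this
        rw [this]
    _ = volume.withDensity fun x => ENNReal.ofReal (pjoint (y, x) / py y) :=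
        withDensity_congr_ae hae1.symm
end
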